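/- For any p, q in the monoid of queue actions Q, the following are equivalent: (1) p and q are related by the reflexive-transitive closure of transposition; (2) p is conjugate to q (there exists x ∈ Q with px = xq); (3) q is conjugate to p; (4) π(p) ∼ π(q) and π̄(p) ∼ π̄(q) as words in the free monoid A*, where ∼ is transposition (cyclic conjugacy) in A*. -/

import Mathlib

/-- A basic queue action: write a letter or read a letter. -/
inductive Act (A : Type) : Type
  | wr (a : A)
  | rd (a : A)
deriving DecidableEq

variable {A : Type} [DecidableEq A]

/-- The action of words over `Act A` on queue states `A* ∪ {⊥}` (⊥ = `none`). -/
def act : Option (List A) → List (Act A) → Option (List A)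
  | q, [] => q
  | none, _ :: _ => none
  | some q, (Act.wr a) :: u => act (some (q ++ [a])) u
  | some q, (Act.rd a) :: u =>
    match q with
    | [] => none
    | b :: q' => if b = a then act (some q') u else none

/-- Two words over `Act A` are equivalent if they act identically on all queues. -/
def qequiv (u v : List (Act A)) : Prop := ∀ q : List A, act (some q) u = act (some q) v

/-- Writing the word `w`. -/
def W (w : List A) : List (Act A) := w.map Act.wr

/-- Reading the word `w` (the barred copy of `w`). -/
def R (w : List A) : List (Act A) := w.map Act.rd

/-- `shuffle s` is the word `s₁ s̄₁ s₂ s̄₂ … sₖ s̄ₖ`. -/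
def shuffle (s : List A) : List (Act A) := s.flatMap fun a => [Act.wr a, Act.rd a]

/-- The projection to write letters. -/
def prW (w : List (Act A)) : List A :=
  w.filterMap fun x => match x with | Act.wr a => some a | Act.rd _ => none

/-- The projection to read letters (with the bars removed). -/
def prR (w : List (Act A)) : List A :=
  w.filterMap fun x => match x with | Act.wr _ => none | Act.rd a => some a

theorem act_append (u v : List (Act A)) : ∀ q, act q (u ++ v) = act (act q u) v := by
  induction u with
  | nil =>
      intro q
      cases q <;> rfl
  | cons x u ih =>
      intro q
      cases q with
      | none =>
          simp only [List.cons_append, act]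
          cases v with
          | nil => rfl
          | cons _ _ => rfl
      | some q =>
          cases x with
          | wr a => simpa [act] using ih _
          | rd a =>
              cases q with
              | nil =>
                  simp only [List.cons_append, act]
                  cases v with
                  | nil => rfl
                  | cons _ _ => rfl
              | cons b q' =>
                  by_cases h : b = a
                  · simp [List.cons_append, act, h, ih]
                  · simp only [List.cons_append, act, if_neg h]
                    cases v with
                    | nil => rfl
                    | cons _ _ => rfl

/-- The setoid of queue-action equivalence. -/
def qsetoid (A : Type) [DecidableEq A] : Setoid (List (Act A)) :=
  ⟨qequiv, ⟨fun _ _ => rfl, fun h q => (h q).symm, fun h1 h2 q => (h1 q).trans (h2 q)⟩⟩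

/-- The monoid of queue actions. -/
def QAct (A : Type) [DecidableEq A] : Type := Quotient (qsetoid A)

theorem act_none : ∀ v : List (Act A), act (none : Option (List A)) v = none
  | [] => rfl
  | _ :: _ => rfl

theorem qequiv_append {u u' v v' : List (Act A)} (hu : qequiv u u') (hv : qequiv v v') :
    qequiv (u ++ v) (u' ++ v') := by
  intro q
  rw [act_append, act_append, hu q]
  cases h : act (some q) u' with
  | none => rw [act_none, act_none]
  | some q' => exact hv q'

instance : Monoid (QAct A) where
  mul := Quotient.map₂ (· ++ ·) (fun _ _ hu _ _ hv => qequiv_append hu hv)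
  one := Quotient.mk (qsetoid A) []
  mul_assoc := by
    rintro ⟨u⟩ ⟨v⟩ ⟨w⟩
    exact congrArg (Quotient.mk (qsetoid A)) (List.append_assoc u v w)
  one_mul := by
    rintro ⟨u⟩
    rfl
  mul_one := by
    rintro ⟨u⟩
    exact congrArg (Quotient.mk (qsetoid A)) (List.append_nil u)

/-- The class of a word in the monoid of queue actions. -/
def cls (w : List (Act A)) : QAct A := Quotient.mk (qsetoid A) w

theorem cls_mul (u v : List (Act A)) : cls u * cls v = cls (u ++ v) := rfl

set_option linter.unusedSectionVars false
set_option linter.unnecessarySimpa false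

/-! ### Projections and the overhang -/

theorem prW_append (u v : List (Act A)) : prW (u ++ v) = prW u ++ prW v :=
  List.filterMap_append

theorem prR_append (u v : List (Act A)) : prR (u ++ v) = prR u ++ prR v :=
  List.filterMap_append

@[simp] theorem prW_W (w : List A) : prW (W w) = w := by
  induction w with
  | nil => rfl
  | cons a w ih => simpa [W, prW] using ih

@[simp] theorem prR_W (w : List A) : prR (W w) = [] := by
  induction w with
  | nil => rfl
  | cons a w ih => simpa [W, prR] using ih

@[simp] theorem prW_R (w : List A) : prW (R w) = [] := by
  induction w with
  | nil => rfl
  | cons a w ih => simpa [R, prW] using ih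

@[simp] theorem prR_R (w : List A) : prR (R w) = w := by
  induction w with
  | nil => rfl
  | cons a w ih => simpa [R, prR] using ih

/-- The overhang: the maximum over prefixes of (#reads − #writes). -/
def ov : List (Act A) → ℕ
  | [] => 0
  | (Act.wr _) :: u => ov u - 1
  | (Act.rd _) :: u => ov u + 1

theorem ov_le_prR : ∀ u : List (Act A), ov u ≤ (prR u).length
  | [] => le_refl _
  | (Act.wr _) :: u => by
      simpa [ov, prR] using (Nat.sub_le (ov u) 1).trans (ov_le_prR u)
  | (Act.rd _) :: u => by
      simpa [ov, prR] using ov_le_prR u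

/-- Master formula for the action of a word on a queue. -/
theorem act_formula : ∀ (u : List (Act A)) (q : List A),
    act (some q) u =
      if prR u <+: q ++ prW u ∧ ov u ≤ q.length
      then some ((q ++ prW u).drop (prR u).length) else none
  | [], q => by
      simp [act, prR, prW, ov, List.nil_prefix]
  | (Act.wr a) :: u, q => by
      have h1 : q ++ prW (Act.wr a :: u) = (q ++ [a]) ++ prW u := by
        simp [prW]
      have : act (some q) (Act.wr a :: u) = act (some (q ++ [a])) u := rfl
      rw [this, act_formula u (q ++ [a])]
      have hov : (ov u - 1 ≤ q.length) ↔ (ov u ≤ (q ++ [a]).length) := by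
        simp [Nat.sub_le_iff_le_add]
      have hr : prR (Act.wr a :: u) = prR u := by simp [prR]
      rw [hr, h1]
      rw [show ov (Act.wr a :: u) = ov u - 1 from rfl]
      by_cases hp : prR u <+: (q ++ [a]) ++ prW u
      · by_cases h2 : ov u ≤ q.length + 1
        · rw [if_pos ⟨hp, by simpa using h2⟩, if_pos ⟨hp, by simpa [hov] using h2⟩]
        · rw [if_neg, if_neg]
          · rintro ⟨-, h⟩; exact h2 (by simpa [Nat.sub_le_iff_le_add] using h)
          · rintro ⟨-, h⟩; exact h2 (by simpa using h)
      · rw [if_neg (fun h => hp h.1), if_neg (fun h => hp h.1)]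
  | (Act.rd c) :: u, [] => by
      have : act (some []) (Act.rd c :: u) = none := rfl
      rw [this, if_neg]
      rintro ⟨-, h⟩
      simp [ov] at h
  | (Act.rd c) :: u, b :: q' => by
      have hr : prR (Act.rd c :: u) = c :: prR u := by simp [prR]
      have hw : prW (Act.rd c :: u) = prW u := by simp [prW]
      rw [hr, hw]
      have hact : act (some (b :: q')) (Act.rd c :: u)
          = if b = c then act (some q') u else none := rfl
      by_cases hbc : b = c
      · subst hbc
        rw [hact, if_pos rfl, act_formula u q']
        have hpre : (b :: prR u <+: (b :: q') ++ prW u) ↔ (prR u <+: q' ++ prW u) := by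
          simp [List.cons_prefix_cons]
        by_cases hp : prR u <+: q' ++ prW u
        · by_cases h2 : ov u ≤ q'.length
          · rw [if_pos ⟨hp, h2⟩, if_pos ⟨hpre.2 hp, by simp [ov]; omega⟩]
            simp
          · rw [if_neg (fun h => h2 h.2), if_neg]
            rintro ⟨-, h⟩
            simp [ov] at h; omega
        · rw [if_neg (fun h => hp h.1), if_neg (fun h => hp (hpre.1 h.1))]
      · rw [hact, if_neg hbc, if_neg]
        rintro ⟨h, -⟩
        rw [List.cons_append, List.cons_prefix_cons] at h
        exact hbc h.1.symm

/-! ### The normalized overhang and classification of classes -/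

theorem nov_exists (u : List (Act A)) :
    ∃ k, ov u ≤ k ∧ (prR u).drop k <+: prW u :=
  ⟨max (ov u) (prR u).length, le_max_left _ _, by
    rw [List.drop_eq_nil_of_le (le_max_right _ _)]; exact List.nil_prefix⟩

/-- The normalized overhang. -/
def nov (u : List (Act A)) : ℕ := Nat.find (nov_exists u)

theorem ov_le_nov (u : List (Act A)) : ov u ≤ nov u :=
  (Nat.find_spec (nov_exists u)).1

theorem nov_drop_prefix (u : List (Act A)) : (prR u).drop (nov u) <+: prW u :=
  (Nat.find_spec (nov_exists u)).2

theorem nov_min {u : List (Act A)} {k : ℕ} (h1 : ov u ≤ k)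
    (h2 : (prR u).drop k <+: prW u) : nov u ≤ k :=
  Nat.find_min' (nov_exists u) ⟨h1, h2⟩

theorem nov_le_prR (u : List (Act A)) : nov u ≤ (prR u).length :=
  nov_min (ov_le_prR u) (by simp [List.nil_prefix])

attribute [irreducible] nov

/-- Under the overall prefix condition, the overhang bound and its normalized
version are interchangeable. -/
theorem ov_iff_nov {u : List (Act A)} {q : List A} (h : prR u <+: q ++ prW u) :
    (ov u ≤ q.length ↔ nov u ≤ q.length) := by
  constructor
  · intro hov
    by_cases hq : (prR u).length ≤ q.length
    · exact (nov_le_prR u).trans hq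
    · apply nov_min hov
      obtain ⟨t, ht⟩ := h
      have hlen : q.length ≤ (prR u).length := le_of_not_ge hq
      have := congrArg (List.drop q.length) ht
      rw [List.drop_append_of_le_length hlen] at this
      rw [List.drop_left] at this
      exact ⟨t, this⟩
  · intro h; exact (ov_le_nov u).trans h

/-- Classification: words with equal projections and normalized overhang are
equivalent queue actions. -/
theorem qequiv_of_triple {u v : List (Act A)} (hW : prW u = prW v)
    (hR : prR u = prR v) (hn : nov u = nov v) : qequiv u v := by
  intro q
  rw [act_formula, act_formula, hW, hR]
  by_cases hp : prR v <+: q ++ prW v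
  · have hp' : prR u <+: q ++ prW u := by rw [hW, hR]; exact hp
    have h1 : (ov u ≤ q.length) ↔ (ov v ≤ q.length) := by
      rw [ov_iff_nov hp', hn, ← ov_iff_nov hp]
    by_cases h2 : ov v ≤ q.length
    · rw [if_pos ⟨hp, h1.2 h2⟩, if_pos ⟨hp, h2⟩]
    · rw [if_neg (fun h => h2 (h1.1 h.2)), if_neg (fun h => h2 h.2)]
  · rw [if_neg (fun h => hp h.1), if_neg (fun h => hp h.1)]

theorem cls_eq_of_triple {u v : List (Act A)} (hW : prW u = prW v)
    (hR : prR u = prR v) (hn : nov u = nov v) : cls u = cls v :=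
  Quotient.sound (qequiv_of_triple hW hR hn)

/-! ### Projections are invariant under equivalence -/

theorem act_probe (z : List (Act A)) (n : ℕ) (hn : ov z ≤ n) (e : A) :
    act (some (prR z ++ List.replicate n e)) z
      = some (List.replicate n e ++ prW z) := by
  rw [act_formula, if_pos, List.append_assoc, List.drop_left]
  constructor
  · rw [List.append_assoc]; exact List.prefix_append _ _
  · simp only [List.length_append, List.length_replicate]
    omega

theorem prR_prefix_of_qequiv [Nontrivial A] {z z' : List (Act A)}
    (h : qequiv z z') : prR z' <+: prR z := by
  obtain ⟨a, b, hab⟩ := exists_pair_ne A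
  set n := max (ov z) (ov z') + 1 with hn
  have key : ∀ e : A, prR z' <+: prR z ++ (List.replicate n e ++ prW z') := by
    intro e
    have h1 : act (some (prR z ++ List.replicate n e)) z
        = some (List.replicate n e ++ prW z) := act_probe z n (by omega) e
    have h2 := (h (prR z ++ List.replicate n e)).symm.trans h1
    rw [act_formula] at h2
    by_cases hc : prR z' <+: (prR z ++ List.replicate n e) ++ prW z'
          ∧ ov z' ≤ (prR z ++ List.replicate n e).length
    · rw [← List.append_assoc]; exact hc.1
    · rw [if_neg hc] at h2; exact absurd h2 (by simp)
  by_cases hl : (prR z').length ≤ (prR z).length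
  · exact List.prefix_of_prefix_length_le (key a) (List.prefix_append _ _) hl
  · exfalso
    push_neg at hl
    have hstep : ∀ e : A, prR z ++ [e] <+: prR z' := by
      intro e
      apply List.prefix_of_prefix_length_le _ (key e)
      · simp only [List.length_append, List.length_singleton]; omega
      · rw [List.prefix_append_right_inj]
        obtain ⟨m, hm⟩ := Nat.exists_eq_succ_of_ne_zero (n := n) (by omega)
        rw [hm, List.replicate_succ, List.cons_append, List.cons_prefix_cons]
        exact ⟨rfl, List.nil_prefix⟩
    have h1 := List.prefix_of_prefix_length_le (hstep a) (hstep b) (by simp)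
    have h2 := h1.eq_of_length (by simp)
    have h3 := List.append_cancel_left h2
    simp only [List.cons.injEq, and_true] at h3
    exact hab h3

theorem prR_eq_of_qequiv [Nontrivial A] {z z' : List (Act A)}
    (h : qequiv z z') : prR z = prR z' :=
  List.IsPrefix.eq_of_length
    (prR_prefix_of_qequiv (fun q => (h q).symm))
    (le_antisymm (prR_prefix_of_qequiv (fun q => (h q).symm)).length_le
      (prR_prefix_of_qequiv h).length_le)

theorem prW_eq_of_qequiv [Nontrivial A] {z z' : List (Act A)}
    (h : qequiv z z') : prW z = prW z' := by
  obtain ⟨a, b, hab⟩ := exists_pair_ne A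
  have hr : prR z = prR z' := prR_eq_of_qequiv h
  set n := max (ov z) (ov z') + 1 with hn
  have h1 : act (some (prR z ++ List.replicate n a)) z
      = some (List.replicate n a ++ prW z) := act_probe z n (by omega) a
  have h2 : act (some (prR z' ++ List.replicate n a)) z'
      = some (List.replicate n a ++ prW z') := act_probe z' n (by omega) a
  rw [← hr] at h2
  have h3 := (h _).symm.trans h1
  rw [h2] at h3
  have := Option.some.inj h3
  exact (List.append_cancel_left this).symm

/-! ### Conjugacy in the free monoid -/

theorem list_conj_aux {α : Type} : ∀ (n : ℕ) (p q t : List α), t.length ≤ n →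
    p ++ t = t ++ q → ∃ x y, p = x ++ y ∧ q = y ++ x := by
  intro n
  induction n with
  | zero =>
      intro p q t ht h
      have ht0 : t = [] := List.length_eq_zero_iff.mp (Nat.le_zero.mp ht)
      subst ht0; simp at h; exact ⟨p, [], by simp, by simp [h]⟩
  | succ n ih =>
      intro p q t ht h
      rcases p with _ | ⟨a, p'⟩
      · simp at h; exact ⟨[], [], by simp, by simp [h]⟩
      set p := a :: p' with hp
      by_cases hl : t.length ≤ p.length
      · have h1 : t <+: p := by
          have := congrArg (List.take t.length) h
          rw [List.take_append_of_le_length hl, List.take_left] at this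
          refine ⟨List.drop t.length p, ?_⟩
          conv_rhs => rw [← List.take_append_drop t.length p]
          rw [this]
        obtain ⟨s, hs⟩ := h1
        refine ⟨t, s, hs.symm, ?_⟩
        rw [← hs, List.append_assoc] at h
        exact (List.append_cancel_left h).symm
      · push_neg at hl
        have h1 : p <+: t := by
          have := congrArg (List.take p.length) h
          rw [List.take_left, List.take_append_of_le_length hl.le] at this
          refine ⟨List.drop p.length t, ?_⟩
          conv_rhs => rw [← List.take_append_drop p.length t]
          rw [← this]
        obtain ⟨t', htt⟩ := h1
        rw [← htt] at h
        rw [List.append_assoc] at h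
        have h2 : p ++ t' = t' ++ q := List.append_cancel_left h
        have hlen : t'.length ≤ n := by
          have : t.length = p.length + t'.length := by rw [← htt]; simp
          have hp1 : 0 < p.length := by simp [hp]
          omega
        obtain ⟨x, y, hx, hy⟩ := ih p q t' hlen h2
        exact ⟨x, y, hx, hy⟩

theorem list_conj {α : Type} {p q t : List α} (h : p ++ t = t ++ q) :
    ∃ x y, p = x ++ y ∧ q = y ++ x :=
  list_conj_aux t.length p q t (le_refl _) h

/-! ### (1) → (2) and (2) → (4) -/

theorem conj_of_chain {P Q : QAct A}
    (h : Relation.ReflTransGen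
      (fun p q : QAct A => ∃ r s : QAct A, p = r * s ∧ q = s * r) P Q) :
    ∃ x : QAct A, P * x = x * Q := by
  induction h with
  | refl => exact ⟨1, by rw [mul_one, one_mul]⟩
  | tail _ hstep ih =>
      obtain ⟨x, hx⟩ := ih
      obtain ⟨r, s, h1, h2⟩ := hstep
      exact ⟨x * r, by rw [← mul_assoc, hx, h1, h2, mul_assoc, mul_assoc, mul_assoc]⟩

theorem proj_conj_of_conj [Nontrivial A] {u v : List (Act A)}
    (h : ∃ x : QAct A, cls u * x = x * cls v) :
    (∃ r s : List A, prW u = r ++ s ∧ prW v = s ++ r) ∧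
      (∃ r s : List A, prR u = r ++ s ∧ prR v = s ++ r) := by
  obtain ⟨x, hx⟩ := h
  obtain ⟨X, rfl⟩ := Quotient.exists_rep x
  have hq : qequiv (u ++ X) (X ++ v) := Quotient.exact hx
  constructor
  · have := prW_eq_of_qequiv hq
    rw [prW_append, prW_append] at this
    exact list_conj this
  · have := prR_eq_of_qequiv hq
    rw [prR_append, prR_append] at this
    exact list_conj this

/-! ### Transposition chains -/

/-- The transposition step relation on queue actions. -/
def tstep (p q : QAct A) : Prop := ∃ r s : QAct A, p = r * s ∧ q = s * r

/-- Connectedness by chains of transpositions. -/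
def Conn : QAct A → QAct A → Prop := Relation.ReflTransGen tstep

theorem tstep_words (X Y : List (Act A)) : tstep (cls (X ++ Y)) (cls (Y ++ X)) :=
  ⟨cls X, cls Y, (cls_mul ..), (cls_mul ..)⟩

theorem tstep_symm {p q : QAct A} (h : tstep p q) : tstep q p := by
  obtain ⟨r, s, h1, h2⟩ := h; exact ⟨s, r, h2, h1⟩

theorem conn_symm {p q : QAct A} (h : Conn p q) : Conn q p :=
  by
    haveI : Std.Symm (tstep (A := A)) := ⟨fun _ _ => tstep_symm⟩
    exact (symm (show Relation.ReflTransGen tstep p q from h) : Relation.ReflTransGen tstep q p)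

theorem conn_trans {p q r : QAct A} (h1 : Conn p q) (h2 : Conn q r) : Conn p r :=
  Relation.ReflTransGen.trans h1 h2

theorem conn_of_eq {p q : QAct A} (h : p = q) : Conn p q := h ▸ Relation.ReflTransGen.refl

theorem conn_step {X Y : List (Act A)} {p : QAct A} (h : Conn (cls (Y ++ X)) p) :
    Conn (cls (X ++ Y)) p :=
  Relation.ReflTransGen.head (tstep_words X Y) h

/-! ### The sliding-window words -/

/-- Sliding-window word: reads the last part of `σ`, writes `w`, reads the
first part of `σ`. -/
def Vw (w σ : List A) (t : ℕ) : List (Act A) := R (σ.drop t) ++ W w ++ R (σ.take t)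

/-- The bottom word `W w ++ R σ`. -/
def BW (w σ : List A) : List (Act A) := W w ++ R σ

@[simp] theorem R_append (x y : List A) : R (x ++ y) = R x ++ R y := List.map_append
@[simp] theorem W_append (x y : List A) : W (x ++ y) = W x ++ W y := List.map_append

theorem ov_nil : ov ([] : List (Act A)) = 0 := rfl

theorem ov_R_append (x : List A) (z : List (Act A)) : ov (R x ++ z) = ov z + x.length := by
  induction x with
  | nil => simp [R]
  | cons a x ih =>
      have h1 : ov (R (a :: x) ++ z) = ov (R x ++ z) + 1 := rfl
      rw [h1, ih, List.length_cons]; omega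

theorem ov_W_append (w : List A) (z : List (Act A)) : ov (W w ++ z) = ov z - w.length := by
  induction w with
  | nil => simp [W]
  | cons a w ih =>
      have h1 : ov (W (a :: w) ++ z) = ov (W w ++ z) - 1 := rfl
      rw [h1, ih, List.length_cons]
      omega

@[simp] theorem ov_R (x : List A) : ov (R x) = x.length := by
  have := ov_R_append x []
  simpa [ov_nil] using this

@[simp] theorem prW_Vw (w σ : List A) (t : ℕ) : prW (Vw w σ t) = w := by
  simp [Vw, prW_append]

@[simp] theorem prR_Vw (w σ : List A) (t : ℕ) :
    prR (Vw w σ t) = σ.drop t ++ σ.take t := by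
  simp [Vw, prR_append]

@[simp] theorem prW_BW (w σ : List A) : prW (BW w σ) = w := by simp [BW, prW_append]
@[simp] theorem prR_BW (w σ : List A) : prR (BW w σ) = σ := by simp [BW, prR_append]

theorem Vw_length : ∀ (w σ : List A), Vw w σ σ.length = BW w σ := by
  intro w σ; simp [Vw, BW, List.drop_length, List.take_length, R]

/-- Sliding the window by one step is a single transposition. -/
theorem conn_V_succ (w σ : List A) (t : ℕ) (ht : t < σ.length) {p : QAct A}
    (h : Conn (cls (Vw w σ (t + 1))) p) : Conn (cls (Vw w σ t)) p := by
  have hdrop : σ.drop t = σ[t] :: σ.drop (t + 1) := List.drop_eq_getElem_cons ht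
  have h1 : Vw w σ t = [Act.rd σ[t]] ++ (R (σ.drop (t+1)) ++ W w ++ R (σ.take t)) := by
    rw [Vw, hdrop]
    simp only [R, List.map_cons, List.cons_append, List.singleton_append,
      List.append_assoc, List.nil_append]
  have h2 : (R (σ.drop (t+1)) ++ W w ++ R (σ.take t)) ++ [Act.rd σ[t]]
      = Vw w σ (t + 1) := by
    have : σ.take t ++ [σ[t]] = σ.take (t+1) := List.take_concat_get' σ t ht
    simp only [Vw, ← this, R_append]
    simp [R]
  rw [h1]
  apply conn_step
  rw [h2]
  exact h

theorem conn_V_bot (w σ : List A) : ∀ (n t : ℕ), t + n = σ.length →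
    Conn (cls (Vw w σ t)) (cls (BW w σ)) := by
  intro n
  induction n with
  | zero =>
      intro t ht
      have : t = σ.length := by omega
      subst this
      exact conn_of_eq (congrArg cls (Vw_length w σ))
  | succ n ih =>
      intro t ht
      exact conn_V_succ w σ t (by omega) (ih (t+1) (by omega))

/-- Every queue action is connected to a bottom word. -/
theorem conn_to_bot (z : List (Act A)) :
    Conn (cls z) (cls (BW (prW z) ((prR z).rotate (nov z)))) := by
  have hk : nov z ≤ (prR z).length := nov_le_prR z
  have hdp : (prR z).drop (nov z) <+: prW z := nov_drop_prefix z
  have hdlen : ((prR z).drop (nov z)).length ≤ (prW z).length := hdp.length_le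
  have hτeq : (prR z).rotate (nov z) = (prR z).drop (nov z) ++ (prR z).take (nov z) :=
    List.rotate_eq_drop_append_take hk
  have hlen_drop : ((prR z).drop (nov z)).length = (prR z).length - nov z :=
    List.length_drop ..
  have hprR : prR (Vw (prW z) ((prR z).rotate (nov z)) ((prR z).length - nov z))
      = prR z := by
    rw [prR_Vw, hτeq, List.drop_left' (by rw [hlen_drop]),
      List.take_left' (by rw [hlen_drop])]
    exact List.take_append_drop _ _
  have hov : ov (Vw (prW z) ((prR z).rotate (nov z)) ((prR z).length - nov z))
      = nov z := by
    rw [Vw, List.append_assoc, ov_R_append, ov_W_append, ov_R]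
    rw [List.length_take, List.length_drop, List.length_rotate]
    simp only [List.length_drop] at hdlen
    omega
  have hnov : nov (Vw (prW z) ((prR z).rotate (nov z)) ((prR z).length - nov z))
      = nov z := by
    apply le_antisymm
    · exact nov_min (le_of_eq hov) (by rw [hprR, prW_Vw]; exact hdp)
    · exact le_trans (le_of_eq hov.symm) (ov_le_nov _)
  have heq : cls z
      = cls (Vw (prW z) ((prR z).rotate (nov z)) ((prR z).length - nov z)) :=
    cls_eq_of_triple (prW_Vw ..).symm hprR.symm hnov.symm
  refine conn_trans (conn_of_eq heq) (conn_V_bot _ _ (nov z) _ ?_)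
  rw [List.length_rotate]
  omega

/-- Good single rotation of the read word at a fixed write word. -/
theorem conn_bot_rot {w σ : List A} (hσ : ¬ (σ <+: w)) :
    Conn (cls (BW w σ)) (cls (BW w (σ.rotate 1))) := by
  rcases σ with _ | ⟨c, σ₂⟩
  · exact conn_of_eq rfl
  have hrot : (c :: σ₂).rotate 1 = σ₂ ++ [c] := by
    have := List.rotate_cons_succ σ₂ c 0
    simpa using this
  have hlen : (σ₂ ++ [c]).length = σ₂.length + 1 := by simp
  -- the V word for the rotated read word, at window position |σ₂|
  have hprR : prR (Vw w (σ₂ ++ [c]) σ₂.length) = c :: σ₂ := by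
    rw [prR_Vw, List.drop_left, List.take_left]
    rfl
  have hov : ov (Vw w (σ₂ ++ [c]) σ₂.length) = 1 + (σ₂.length - w.length) := by
    rw [Vw, List.append_assoc, ov_R_append, ov_W_append, ov_R]
    rw [List.length_take, List.drop_left]
    simp only [List.length_singleton, hlen]
    have : min σ₂.length (σ₂.length + 1) = σ₂.length := by omega
    rw [this]
    omega
  have hovB : ov (BW w (c :: σ₂)) = (σ₂.length + 1) - w.length := by
    rw [BW, ov_W_append, ov_R]
    rfl
  -- the two normalized overhangs agree
  have hnov : nov (BW w (c :: σ₂)) = nov (Vw w (σ₂ ++ [c]) σ₂.length) := by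
    have h1 : nov (BW w (c :: σ₂)) ≠ 0 := by
      intro h0
      have := nov_drop_prefix (BW w (c :: σ₂))
      rw [h0, prR_BW, prW_BW, List.drop_zero] at this
      exact hσ this
    apply le_antisymm
    · apply nov_min
      · rw [hovB]
        have h2 := ov_le_nov (Vw w (σ₂ ++ [c]) σ₂.length)
        rw [hov] at h2
        omega
      · have := nov_drop_prefix (Vw w (σ₂ ++ [c]) σ₂.length)
        rw [hprR, prW_Vw] at this
        rw [prR_BW, prW_BW]
        exact this
    · apply nov_min
      · rw [hov]
        have h2 := ov_le_nov (BW w (c :: σ₂))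
        rw [hovB] at h2
        have h3 := h1
        omega
      · have := nov_drop_prefix (BW w (c :: σ₂))
        rw [prR_BW, prW_BW] at this
        rw [hprR, prW_Vw]
        exact this
  have heq : cls (BW w (c :: σ₂)) = cls (Vw w (σ₂ ++ [c]) σ₂.length) :=
    cls_eq_of_triple (by rw [prW_BW, prW_Vw]) (by rw [prR_BW, hprR]) hnov
  rw [hrot]
  refine conn_trans (conn_of_eq heq) (conn_V_bot _ _ 1 _ ?_)
  simp

/-- Iterated good rotations. -/
theorem conn_fwd (w σ : List A) : ∀ n : ℕ, (∀ i < n, ¬ (σ.rotate i <+: w)) →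
    Conn (cls (BW w σ)) (cls (BW w (σ.rotate n))) := by
  intro n
  induction n with
  | zero => intro _; rw [List.rotate_zero]; exact Relation.ReflTransGen.refl
  | succ n ih =>
      intro h
      refine conn_trans (ih (fun i hi => h i (by omega))) ?_
      have := conn_bot_rot (w := w) (σ := σ.rotate n) (h n (by omega))
      rwa [List.rotate_rotate] at this

/-- Any rotation of the read word, at a fixed write word. -/
theorem conn_bot_cyc (w σ : List A) (j : ℕ) :
    Conn (cls (BW w σ)) (cls (BW w (σ.rotate j))) := by
  rcases hσe : σ with _ | ⟨c, σ₂⟩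
  · rw [List.rotate_nil]; exact Relation.ReflTransGen.refl
  rw [← hσe]
  have hm : 0 < σ.length := by rw [hσe]; simp
  by_cases hall : ∀ i < j, ¬ (σ.rotate i <+: w)
  · exact conn_fwd w σ j hall
  push_neg at hall
  obtain ⟨i, hij, hi⟩ := hall
  have hex1 : ∃ i, σ.rotate i <+: w := ⟨i, hi⟩
  classical
  let i₀ := Nat.find hex1
  have hi₀ : σ.rotate i₀ <+: w := Nat.find_spec hex1
  have hfwd1 : Conn (cls (BW w σ)) (cls (BW w (σ.rotate i₀))) :=
    conn_fwd w σ i₀ (fun i hilt => Nat.find_min hex1 hilt)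
  have hex2 : ∃ t, (σ.rotate j).rotate t <+: w := by
    refine ⟨(i₀ + σ.length * (j + 1)) - j, ?_⟩
    rw [List.rotate_rotate]
    have hge : j ≤ i₀ + σ.length * (j + 1) := by nlinarith
    have : j + ((i₀ + σ.length * (j + 1)) - j) = i₀ + σ.length * (j + 1) := by omega
    rw [this]
    have : σ.rotate (i₀ + σ.length * (j + 1)) = σ.rotate i₀ := by
      rw [← List.rotate_mod σ (i₀ + σ.length * (j + 1)), Nat.add_mul_mod_self_left,
        List.rotate_mod]
    rwa [this]
  let t₁ := Nat.find hex2
  have ht₁ : (σ.rotate j).rotate t₁ <+: w := Nat.find_spec hex2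
  have hfwd2 : Conn (cls (BW w (σ.rotate j))) (cls (BW w ((σ.rotate j).rotate t₁))) :=
    conn_fwd w (σ.rotate j) t₁ (fun i hilt => Nat.find_min hex2 hilt)
  have hsame : (σ.rotate j).rotate t₁ = σ.rotate i₀ := by
    apply List.prefix_of_prefix_length_le ht₁ hi₀ (by simp) |>.eq_of_length
    simp [List.length_rotate]
  rw [hsame] at hfwd2
  exact conn_trans hfwd1 (conn_symm hfwd2)

/-- One rotation of the write word (at the cost of rotating the read word). -/
theorem conn_bot_w1 (c : A) (w₂ σ : List A) :
    ∃ j : ℕ, Conn (cls (BW (c :: w₂) σ)) (cls (BW (w₂ ++ [c]) (σ.rotate j))) := by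
  have h1 : BW (c :: w₂) σ = [Act.wr c] ++ (W w₂ ++ R σ) := by
    simp [BW, W]
  have h2 := conn_to_bot (W w₂ ++ R σ ++ [Act.wr c])
  have e1 : prW ([Act.wr c] : List (Act A)) = [c] := rfl
  have e2 : prR ([Act.wr c] : List (Act A)) = [] := rfl
  have hprW : prW (W w₂ ++ R σ ++ [Act.wr c]) = w₂ ++ [c] := by
    rw [prW_append, prW_append, prW_W, prW_R, e1]
    simp
  have hprR : prR (W w₂ ++ R σ ++ [Act.wr c]) = σ := by
    rw [prR_append, prR_append, prR_W, prR_R, e2]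
    simp
  rw [hprW, hprR] at h2
  refine ⟨nov (W w₂ ++ R σ ++ [Act.wr c]), ?_⟩
  rw [h1]
  apply conn_step
  exact h2

/-- Full connectivity of bottom words over rotation classes. -/
theorem conn_bot_full (σ : List A) : ∀ (n : ℕ) (w σ' : List A), σ ~r σ' →
    Conn (cls (BW w σ)) (cls (BW (w.rotate n) σ')) := by
  intro n
  induction n with
  | zero =>
      intro w σ' hrot
      obtain ⟨t, ht⟩ := hrot
      rw [List.rotate_zero, ← ht]
      exact conn_bot_cyc w σ t
  | succ n ih =>
      intro w σ' hrot
      rcases hw : w.rotate n with _ | ⟨c, w₂⟩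
      · have hwnil : w = [] := by
          have := List.length_rotate w n
          rw [hw] at this
          exact List.length_eq_zero_iff.mp this.symm
        subst hwnil
        obtain ⟨t, ht⟩ := hrot
        rw [List.rotate_nil, ← ht]
        exact conn_bot_cyc [] σ t
      · have step1 : Conn (cls (BW w σ)) (cls (BW (w.rotate n) σ)) :=
          ih w σ (List.IsRotated.refl σ)
        obtain ⟨j, step2⟩ := conn_bot_w1 c w₂ σ
        rw [← hw] at step2
        have hrr : (w.rotate n).rotate 1 = w.rotate (n + 1) := List.rotate_rotate w n 1
        have hcw : w₂ ++ [c] = (w.rotate n).rotate 1 := by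
          rw [hw]
          have := List.rotate_cons_succ w₂ c 0
          simpa using this.symm
        rw [hcw, hrr] at step2
        have hrot2 : (σ.rotate j) ~r σ' :=
          List.IsRotated.trans (List.IsRotated.symm ⟨j, rfl⟩) hrot
        obtain ⟨t, ht⟩ := hrot2
        have step3 : Conn (cls (BW (w.rotate (n+1)) (σ.rotate j)))
            (cls (BW (w.rotate (n+1)) σ')) := by
          rw [← ht]
          exact conn_bot_cyc _ _ t
        exact conn_trans step1 (conn_trans step2 step3)

/-- (4) → (1): words with conjugate projections are connected by transpositions. -/
theorem chain_of_proj {u v : List (Act A)}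
    (hW : ∃ r s : List A, prW u = r ++ s ∧ prW v = s ++ r)
    (hR : ∃ r s : List A, prR u = r ++ s ∧ prR v = s ++ r) :
    Conn (cls u) (cls v) := by
  obtain ⟨α, β, hu, hv⟩ := hW
  obtain ⟨γ, δ, hru, hrv⟩ := hR
  have h1 := conn_to_bot u
  have h2 := conn_to_bot v
  have hwrot : (prW u).rotate α.length = prW v := by
    rw [hu, hv, List.rotate_eq_drop_append_take (by simp), List.drop_left,
      List.take_left]
  have hrrot : (prR u) ~r (prR v) := by
    rw [hru, hrv]
    exact List.isRotated_append
  have hmid : Conn (cls (BW (prW u) ((prR u).rotate (nov u))))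
      (cls (BW (prW v) ((prR v).rotate (nov v)))) := by
    rw [← hwrot]
    apply conn_bot_full
    exact List.IsRotated.trans (List.IsRotated.symm ⟨nov u, rfl⟩)
      (List.IsRotated.trans hrrot ⟨nov v, rfl⟩)
  exact conn_trans h1 (conn_trans hmid (conn_symm h2))

/-- Conjugacy in `Q`: for queue actions `p = [u]` and `q = [v]`, the following are
equivalent: (1) `p ∼* q` (refl-trans closure of transposition); (2) `p ≈ q`;
(3) `q ≈ p`; (4) the write projections and the read projections of `p` and `q` are
transposed words in the free monoid `A*`. -/
theorem stmt15 [Fintype A] [Nontrivial A] (u v : List (Act A)) :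
    [ Relation.ReflTransGen (fun p q : QAct A => ∃ r s : QAct A, p = r * s ∧ q = s * r)
        (cls u) (cls v),
      ∃ x : QAct A, cls u * x = x * cls v,
      ∃ x : QAct A, cls v * x = x * cls u,
      (∃ r s : List A, prW u = r ++ s ∧ prW v = s ++ r) ∧
        (∃ r s : List A, prR u = r ++ s ∧ prR v = s ++ r) ].TFAE := by
  tfae_have 1 → 2 := fun h => conj_of_chain h
  tfae_have 2 → 4 := fun h => proj_conj_of_conj h
  tfae_have 4 → 1 := fun h => chain_of_proj h.1 h.2
  tfae_have 3 → 4 := by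
    intro h
    obtain ⟨⟨r, s, h1, h2⟩, ⟨r', s', h3, h4⟩⟩ :=
      proj_conj_of_conj (u := v) (v := u) h
    exact ⟨⟨s, r, h2, h1⟩, ⟨s', r', h4, h3⟩⟩
  tfae_have 4 → 3 := by
    intro h
    obtain ⟨⟨r, s, h1, h2⟩, ⟨r', s', h3, h4⟩⟩ := h
    exact conj_of_chain (chain_of_proj ⟨s, r, h2, h1⟩ ⟨s', r', h4, h3⟩)
  tfae_finish
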